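/- arXiv:math/0406468 — 3 statements merged into one kernel-verified Lean document; each statement's English description precedes it below -/
import Mathlib

section
/- Let y ∈ ℝⁿ have pairwise distinct absolute values, let 1 ≤ k ≤ n−1, σ > 0, and set λ = |y|₍ₖ₊₁₎. Let μ̂ₖ and μ̃ₖ be the soft and hard threshold estimators at level λ. Then the Mallows Cₚ criterion of the soft threshold estimator equals the hard-threshold criterion with random penalty: ‖y − μ̂ₖ‖² − nσ² + 2kσ² = ‖y − μ̃ₖ‖² − nσ² + pen(k), where pen(k) = k·|y|₍ₖ₊₁₎² + 2kσ². -/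
open Finset

/-- The soft threshold function with level `t`:
`η(x,t) = x·1_{|x|>t}·(1 − t/|x|)`. -/
noncomputable def softThreshold (x t : ℝ) : ℝ :=
  if t < |x| then x * (1 - t / |x|) else 0

/-- The hard threshold function with level `t`: `η'(x,t) = x·1_{|x|>t}`. -/
noncomputable def hardThreshold (x t : ℝ) : ℝ :=
  if t < |x| then x else 0

/-- `orderStatAbs y k` is `|y|₍ₖ₊₁₎`, the `(k+1)`-st largest value (0-based index `k`)
among the absolute values `|y₁|, …, |yₙ|` sorted in decreasing order. -/
noncomputable def orderStatAbs {n : ℕ} (y : Fin n → ℝ) (k : ℕ) : ℝ :=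
  ((List.ofFn fun i => |y i|).insertionSort (· ≥ ·)).getD k 0

/-- In a strictly decreasing list, exactly `k` entries exceed the entry at index `k`. -/
lemma countP_gt_get_sorted (L : List ℝ) (h : L.Pairwise (· > ·)) (k : ℕ) (hk : k < L.length) :
    L.countP (fun x => decide (L.get ⟨k, hk⟩ < x)) = k := by
  induction L generalizing k with
  | nil => simp at hk
  | cons a t ih =>
    cases k with
    | zero =>
      rw [List.countP_eq_zero]
      intro x hx hpx
      simp only [List.get] at hpx
      rcases List.mem_cons.mp hx with rfl | hx
      · simp at hpx
      · exact absurd (of_decide_eq_true hpx) (not_lt.mpr (le_of_lt (List.rel_of_pairwise_cons h hx)))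
    | succ j =>
      have hj : j < t.length := by simpa using hk
      have hget : (a :: t).get ⟨j+1, hk⟩ = t.get ⟨j, hj⟩ := rfl
      rw [hget, List.countP_cons_of_pos, ih h.of_cons j hj]
      exact decide_eq_true (List.rel_of_pairwise_cons h (t.get_mem _))

lemma card_filter_eq_countP_ofFn (n : ℕ) (f : Fin n → ℝ) (c : ℝ) :
    (univ.filter fun i => c < f i).card = (List.ofFn f).countP (fun x => decide (c < x)) := by
  rw [List.ofFn_eq_map, List.countP_map]
  rw [Fin.univ_def]
  simp [Finset.filter, Finset.card, Multiset.countP_eq_card_filter, Function.comp,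
    List.countP_eq_length_filter]
  rfl

/-- The Mallows `Cₚ` criterion of the soft threshold estimator at level `λ = |y|₍ₖ₊₁₎`
equals the hard-threshold criterion with random penalty
`pen(k) = k·|y|₍ₖ₊₁₎² + 2kσ²`. -/
theorem cp_soft_eq_hard_random_penalty (n k : ℕ) (y : Fin n → ℝ) (σ : ℝ) (hσ : 0 < σ)
    (hinj : Function.Injective fun i => |y i|) (hk : 1 ≤ k) (hk' : k ≤ n - 1) :
    (∑ i, (y i - softThreshold (y i) (orderStatAbs y k)) ^ 2) - n * σ ^ 2 + 2 * k * σ ^ 2 =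
    (∑ i, (y i - hardThreshold (y i) (orderStatAbs y k)) ^ 2) - n * σ ^ 2 +
      ((k : ℝ) * (orderStatAbs y k) ^ 2 + 2 * k * σ ^ 2) := by
  set f : Fin n → ℝ := fun i => |y i| with hf
  set L : List ℝ := (List.ofFn f).insertionSort (· ≥ ·) with hL
  have hperm : L.Perm (List.ofFn f) := List.perm_insertionSort _ _
  have hlen : L.length = n := hperm.length_eq.trans (List.length_ofFn (f := f))
  have hsorted : L.Pairwise (· ≥ ·) := List.pairwise_insertionSort _ _
  have hnodup : L.Nodup := hperm.nodup_iff.mpr (List.nodup_ofFn.mpr hinj)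
  have hstrict : L.Pairwise (· > ·) :=
    (List.Pairwise.and hsorted hnodup).imp fun h => lt_of_le_of_ne h.1 h.2.symm
  have hkn : k < n := by omega
  have hkL : k < L.length := hlen ▸ hkn
  set c : ℝ := orderStatAbs y k with hcdef
  have hc : c = L.get ⟨k, hkL⟩ := by
    rw [hcdef, orderStatAbs, List.getD_eq_getElem]
    · rfl
  -- c is nonnegative, being an absolute value
  have hc0 : 0 ≤ c := by
    have hmem : c ∈ L := hc ▸ L.get_mem _
    have hmem' : c ∈ List.ofFn f := hperm.mem_iff.mp hmem
    obtain ⟨j, hj⟩ := List.mem_ofFn.mp hmem'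
    rw [← hj]; exact abs_nonneg _
  -- exactly k coordinates exceed the threshold
  have hcount : (univ.filter fun i => c < f i).card = k := by
    rw [card_filter_eq_countP_ofFn, ← hperm.countP_eq, hc]
    exact countP_gt_get_sorted L hstrict k hkL
  -- pointwise identity
  have key : ∀ i, (y i - softThreshold (y i) c) ^ 2
      = (y i - hardThreshold (y i) c) ^ 2 + (if c < f i then c ^ 2 else 0) := by
    intro i
    rw [softThreshold, hardThreshold]
    by_cases h : c < |y i|
    · rw [if_pos h, if_pos h, if_pos h]
      have h0 : |y i| ≠ 0 := ne_of_gt (lt_of_le_of_lt hc0 h)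
      have hy0 : y i ≠ 0 := fun hz => h0 (by rw [hz]; simp)
      have h1 : y i - y i * (1 - c / |y i|) = y i * c / |y i| := by
        field_simp
        ring
      rw [h1, sub_self, div_pow, mul_pow, sq_abs, mul_comm ((y i) ^ 2) (c ^ 2),
        mul_div_assoc, div_self (pow_ne_zero 2 hy0), mul_one]
      ring
    · rw [if_neg h, if_neg h, if_neg h]
      ring
  rw [Finset.sum_congr rfl fun i _ => key i, Finset.sum_add_distrib,
    ← Finset.sum_filter, Finset.sum_const, hcount, nsmul_eq_mul]
  ring
end

section
/- Let Q be the tail function of the chi-square distribution with 1 degree of freedom, and define its generalized inverse Q⁻¹(u) = inf{t ≥ 0 : Q(t) ≤ u} for u ∈ (0,1). Then Q⁻¹(u) / (2·log(1/u)) → 1 as u → 0⁺. -/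
open MeasureTheory ProbabilityTheory Filter

/-- The tail function of the chi-square distribution with one degree of freedom:
`Q(t) = P(Z² > t)` for `Z` standard Gaussian. -/
noncomputable def chiSqOneTail (t : ℝ) : ℝ :=
  (((gaussianReal 0 1).map fun x => x ^ 2) (Set.Ioi t)).toReal

/-- The generalized inverse `Q⁻¹(u) = inf {t ≥ 0 : Q(t) ≤ u}`. -/
noncomputable def chiSqOneTailInv (u : ℝ) : ℝ :=
  sInf {t : ℝ | 0 ≤ t ∧ chiSqOneTail t ≤ u}

section Aux

open Real Set
open scoped ENNReal NNReal


lemma sqrt2pi_le : Real.sqrt (2 * π) ≤ 3 := by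
  rw [show (3:ℝ) = Real.sqrt 9 by rw [show (9:ℝ) = 3^2 by norm_num, Real.sqrt_sq]; norm_num]
  exact Real.sqrt_le_sqrt (by nlinarith [Real.pi_le_four])

lemma one_le_sqrt2pi : 1 ≤ Real.sqrt (2 * π) := by
  rw [show (1:ℝ) = Real.sqrt 1 by simp]
  exact Real.sqrt_le_sqrt (by nlinarith [Real.pi_gt_three])

lemma tail_int_le {a : ℝ} (ha : 1 ≤ a) :
    ∫ x in Ioi a, gaussianPDFReal 0 1 x ≤ Real.exp (-a ^ 2 / 2) := by
  have ha0 : 0 < a := by linarith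
  have hint : IntegrableOn (fun x => (Real.sqrt (2 * π))⁻¹ * Real.exp (a ^ 2 / 2) * Real.exp (-a * x)) (Ioi a) :=
    ((exp_neg_integrableOn_Ioi a ha0).const_mul _)
  have hmono : ∫ x in Ioi a, gaussianPDFReal 0 1 x
      ≤ ∫ x in Ioi a, (Real.sqrt (2 * π))⁻¹ * Real.exp (a ^ 2 / 2) * Real.exp (-a * x) := by
    refine setIntegral_mono_on ((integrable_gaussianPDFReal 0 1).restrict) hint measurableSet_Ioi ?_
    intro x hx
    simp only [gaussianPDFReal, NNReal.coe_one, mul_one, sub_zero]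
    rw [mul_assoc, ← Real.exp_add]
    gcongr
    nlinarith [sq_nonneg (x - a)]
  have hcomp : ∫ x in Ioi a, Real.exp (-a * x) = a⁻¹ * Real.exp (-(a * a)) := by
    have := integral_comp_mul_left_Ioi (fun x => Real.exp (-x)) a ha0
    simp only [smul_eq_mul, neg_mul] at this ⊢
    rw [this, integral_exp_neg_Ioi]
  rw [integral_const_mul, hcomp] at hmono
  refine hmono.trans ?_
  have heq : (Real.sqrt (2*π))⁻¹ * Real.exp (a^2/2) * (a⁻¹ * Real.exp (-(a*a)))
      = (Real.sqrt (2*π))⁻¹ * a⁻¹ * Real.exp (a^2/2 + -(a*a)) := by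
    rw [Real.exp_add]; ring
  rw [heq, show a^2/2 + -(a*a) = -a^2/2 by ring]
  have h1 : (Real.sqrt (2 * π))⁻¹ ≤ 1 := by
    rw [inv_le_one_iff₀]; right; exact one_le_sqrt2pi
  have h2 : a⁻¹ ≤ 1 := by rw [inv_le_one_iff₀]; right; exact ha
  have h3 : (0:ℝ) < (Real.sqrt (2 * π))⁻¹ := by positivity
  have h4 : (Real.sqrt (2*π))⁻¹ * a⁻¹ ≤ 1 := mul_le_one₀ h1 (inv_nonneg.2 ha0.le) h2
  nlinarith [Real.exp_pos (-a^2/2)]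

lemma tail_int_ge {a : ℝ} (ha : 0 ≤ a) :
    Real.exp (-(a+1) ^ 2 / 2 - 3/2) ≤ ∫ x in Ioi a, gaussianPDFReal 0 1 x := by
  have h1 : ∫ x in Ioc a (a+1), gaussianPDFReal 0 1 x ≤ ∫ x in Ioi a, gaussianPDFReal 0 1 x := by
    refine setIntegral_mono_set (integrable_gaussianPDFReal 0 1).integrableOn
      (ae_of_all _ (gaussianPDFReal_nonneg 0 1)) (HasSubset.Subset.eventuallyLE Ioc_subset_Ioi_self)
  refine le_trans ?_ h1
  have h2 : ∫ x in Ioc a (a+1), (fun _ : ℝ => gaussianPDFReal 0 1 (a+1)) x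
      ≤ ∫ x in Ioc a (a+1), gaussianPDFReal 0 1 x := by
    refine setIntegral_mono_on (integrableOn_const (by simp) (by simp))
      (integrable_gaussianPDFReal 0 1).integrableOn measurableSet_Ioc ?_
    intro x hx
    simp only [gaussianPDFReal, NNReal.coe_one, mul_one, sub_zero]
    refine mul_le_mul_of_nonneg_left (Real.exp_le_exp.2 ?_) (by positivity)
    nlinarith [hx.1, hx.2, ha]
  refine le_trans ?_ h2
  rw [setIntegral_const, measureReal_def, Real.volume_Ioc, show a + 1 - a = (1:ℝ) by ring, ENNReal.toReal_ofReal zero_le_one, one_smul]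
  simp only [gaussianPDFReal, NNReal.coe_one, mul_one, sub_zero]
  have h32 : Real.sqrt (2*π) ≤ Real.exp (3/2) := by
    have hexp : Real.exp (3/2) = Real.exp (3/4) * Real.exp (3/4) := by
      rw [← Real.exp_add]; norm_num
    nlinarith [Real.add_one_le_exp (3/4 : ℝ), sqrt2pi_le]
  calc Real.exp (-(a+1)^2/2 - 3/2) = Real.exp (-(a+1)^2/2) * (Real.exp (3/2))⁻¹ := by
        rw [Real.exp_sub]; ring
    _ ≤ Real.exp (-(a+1)^2/2) * (Real.sqrt (2*π))⁻¹ := by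
        refine mul_le_mul_of_nonneg_left ?_ (Real.exp_pos _).le
        exact inv_anti₀ (by positivity) h32
    _ = (Real.sqrt (2*π))⁻¹ * Real.exp (-(a+1)^2/2) := by ring


lemma gaussian_neg_symm (a : ℝ) : gaussianReal 0 1 (Iio (-a)) = gaussianReal 0 1 (Ioi a) := by
  have hmap : (gaussianReal 0 1).map (fun x => (-1 : ℝ) * x) = gaussianReal 0 1 := by
    rw [gaussianReal_map_const_mul (-1 : ℝ)]
    norm_num
  conv_lhs => rw [← hmap]
  rw [Measure.map_apply (by fun_prop) measurableSet_Iio]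
  congr 1
  ext x
  simp only [Set.mem_preimage, Set.mem_Iio, Set.mem_Ioi]
  constructor <;> intro h <;> linarith

lemma chiSq_eq (t : ℝ) :
    (((gaussianReal 0 1).map fun x => x ^ 2) (Set.Ioi t)) = gaussianReal 0 1 {x : ℝ | t < x ^ 2} := by
  rw [Measure.map_apply (by fun_prop) measurableSet_Ioi]
  rfl


lemma gaussian_Ioi_toReal (a : ℝ) :
    (gaussianReal 0 1 (Ioi a)).toReal = ∫ x in Ioi a, gaussianPDFReal 0 1 x := by
  rw [gaussianReal_apply_eq_integral 0 one_ne_zero,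
    ENNReal.toReal_ofReal (setIntegral_nonneg measurableSet_Ioi
      (fun x _ => gaussianPDFReal_nonneg 0 1 x))]

lemma chiSqOneTail_le {t : ℝ} (ht : 0 ≤ t) : chiSqOneTail t ≤ 2 * Real.exp (-t/2) := by
  rcases le_or_gt 1 t with h1 | h1
  · have ha : 1 ≤ Real.sqrt t := by
      rw [show (1:ℝ) = Real.sqrt 1 by simp]; exact Real.sqrt_le_sqrt h1
    have hsub : {x : ℝ | t < x ^ 2} ⊆ Iio (-Real.sqrt t) ∪ Ioi (Real.sqrt t) := by
      intro x hx
      simp only [Set.mem_setOf_eq] at hx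
      rcases le_or_gt x 0 with hx0 | hx0
      · left
        simp only [Set.mem_Iio]
        nlinarith [Real.sq_sqrt ht, Real.sqrt_nonneg t, sq_nonneg (x + Real.sqrt t)]
      · right
        simp only [Set.mem_Ioi]
        nlinarith [Real.sq_sqrt ht, Real.sqrt_nonneg t, sq_nonneg (x - Real.sqrt t)]
    have hm : gaussianReal 0 1 {x : ℝ | t < x ^ 2} ≤ 2 * gaussianReal 0 1 (Ioi (Real.sqrt t)) := by
      calc gaussianReal 0 1 {x : ℝ | t < x ^ 2}
          ≤ gaussianReal 0 1 (Iio (-Real.sqrt t) ∪ Ioi (Real.sqrt t)) := measure_mono hsub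
        _ ≤ gaussianReal 0 1 (Iio (-Real.sqrt t)) + gaussianReal 0 1 (Ioi (Real.sqrt t)) :=
            measure_union_le _ _
        _ = 2 * gaussianReal 0 1 (Ioi (Real.sqrt t)) := by rw [gaussian_neg_symm]; ring
    have hfin : (2 : ℝ≥0∞) * gaussianReal 0 1 (Ioi (Real.sqrt t)) ≠ ⊤ :=
      ENNReal.mul_ne_top (by norm_num) (measure_ne_top _ _)
    have := ENNReal.toReal_mono hfin hm
    rw [chiSqOneTail, chiSq_eq]
    refine this.trans ?_
    rw [ENNReal.toReal_mul, ENNReal.toReal_ofNat, gaussian_Ioi_toReal]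
    have := tail_int_le ha
    rw [Real.sq_sqrt ht] at this
    linarith
  · have hle1 : chiSqOneTail t ≤ 1 := by
      rw [chiSqOneTail, chiSq_eq]
      calc (gaussianReal 0 1 {x : ℝ | t < x ^ 2}).toReal
          ≤ (1 : ℝ≥0∞).toReal := ENNReal.toReal_mono ENNReal.one_ne_top (prob_le_one)
        _ = 1 := by simp
    have hexp : Real.exp (1/2) < 2 := by
      have hsq : Real.exp (1/2) * Real.exp (1/2) = Real.exp 1 := by
        rw [← Real.exp_add]; norm_num
      nlinarith [Real.exp_one_lt_d9, Real.exp_pos (1/2 : ℝ)]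
    have : (1:ℝ) ≤ 2 * Real.exp (-t/2) := by
      have h2 : Real.exp (-(1:ℝ)/2) ≤ Real.exp (-t/2) := Real.exp_le_exp.2 (by linarith)
      have h3 : Real.exp (-(1:ℝ)/2) = (Real.exp (1/2))⁻¹ := by
        rw [← Real.exp_neg]; norm_num
      have h4 : (1:ℝ)/2 < Real.exp (-(1:ℝ)/2) := by
        rw [h3]
        rw [lt_inv_comm₀ (by norm_num) (Real.exp_pos _)]
        simpa using hexp
      linarith
    linarith
  
lemma chiSqOneTail_ge {t : ℝ} (ht : 0 ≤ t) :
    Real.exp (-t/2 - Real.sqrt t - 2) ≤ chiSqOneTail t := by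
  have hsub : Ioi (Real.sqrt t) ⊆ {x : ℝ | t < x ^ 2} := by
    intro x hx
    simp only [Set.mem_Ioi] at hx
    simp only [Set.mem_setOf_eq]
    nlinarith [Real.sq_sqrt ht, Real.sqrt_nonneg t]
  rw [chiSqOneTail, chiSq_eq]
  have hm : (gaussianReal 0 1 (Ioi (Real.sqrt t))).toReal
      ≤ (gaussianReal 0 1 {x : ℝ | t < x ^ 2}).toReal :=
    ENNReal.toReal_mono (measure_ne_top _ _) (measure_mono hsub)
  refine le_trans ?_ hm
  rw [gaussian_Ioi_toReal]
  have := tail_int_ge (Real.sqrt_nonneg t)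
  refine le_trans (le_of_eq ?_) this
  congr 1
  have h := Real.sq_sqrt ht
  nlinarith [h]


lemma tailSet_mem {u : ℝ} (hu : u ∈ Ioo (0:ℝ) 1) :
    2 * Real.log (1/u) + 2 * Real.log 2 ∈ {t : ℝ | 0 ≤ t ∧ chiSqOneTail t ≤ u} := by
  have hL : 0 < Real.log (1/u) := Real.log_pos (one_lt_one_div hu.1 hu.2)
  have hl2 : 0 < Real.log 2 := Real.log_pos (by norm_num)
  have ht0 : (0:ℝ) ≤ 2 * Real.log (1/u) + 2 * Real.log 2 := by linarith
  refine ⟨ht0, ?_⟩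
  have := chiSqOneTail_le ht0
  refine this.trans ?_
  have he : Real.exp (-(2 * Real.log (1/u) + 2 * Real.log 2)/2) = u / 2 := by
    rw [show -(2 * Real.log (1/u) + 2 * Real.log 2)/2 = -(Real.log (1/u) + Real.log 2) by ring,
      Real.exp_neg, Real.exp_add, Real.exp_log (one_div_pos.2 hu.1),
      Real.exp_log (by norm_num : (0:ℝ) < 2)]
    field_simp
  rw [he]; linarith [hu.1]

lemma tailInv_nonneg {u : ℝ} (hu : u ∈ Ioo (0:ℝ) 1) : 0 ≤ chiSqOneTailInv u :=
  le_csInf ⟨_, tailSet_mem hu⟩ (fun t ht => ht.1)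

lemma tailInv_le {u : ℝ} (hu : u ∈ Ioo (0:ℝ) 1) :
    chiSqOneTailInv u ≤ 2 * Real.log (1/u) + 2 * Real.log 2 :=
  csInf_le ⟨0, fun t ht => ht.1⟩ (tailSet_mem hu)

lemma tailInv_ge {u ε : ℝ} (hu : u ∈ Ioo (0:ℝ) 1) (hε : 0 < ε) :
    (2 * Real.log (1/u) - 4 - 1/ε)/(1+ε) ≤ chiSqOneTailInv u := by
  refine le_csInf ⟨_, tailSet_mem hu⟩ (fun t ht => ?_)
  obtain ⟨ht0, htu⟩ := ht
  have hQ := (chiSqOneTail_ge ht0).trans htu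
  have hlog : -t/2 - Real.sqrt t - 2 ≤ Real.log u := by
    rw [Real.le_log_iff_exp_le hu.1]
    exact hQ
  have hL : Real.log (1/u) = -Real.log u := by rw [one_div, Real.log_inv]
  have hLle : Real.log (1/u) ≤ t/2 + Real.sqrt t + 2 := by rw [hL]; linarith
  rw [div_le_iff₀ (by linarith : (0:ℝ) < 1+ε)]
  have hs2 : Real.sqrt t ^ 2 = t := Real.sq_sqrt ht0
  have hs : 2 * Real.sqrt t ≤ ε * t + 1/ε := by
    have heq : ε * (ε * t + 1/ε) = ε^2 * t + 1 := by
      field_simp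
    have h1 : ε * (2 * Real.sqrt t) ≤ ε * (ε * t + 1/ε) := by
      rw [heq]; nlinarith [sq_nonneg (ε * Real.sqrt t - 1)]
    exact le_of_mul_le_mul_left h1 hε
  nlinarith [hLle, hs]


end Aux

/-- `Q⁻¹(u) / (2·log(1/u)) → 1` as `u → 0⁺` (for `u ∈ (0,1)`). -/
theorem tendsto_chiSqOneTailInv_div_two_log :
    Tendsto (fun u => chiSqOneTailInv u / (2 * Real.log (1 / u)))
      (nhdsWithin 0 (Set.Ioo (0 : ℝ) 1)) (nhds 1) := by
  rw [Metric.tendsto_nhds]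
  intro ε hε
  set M := max 1 (max (Real.log 2 / ε) ((4 + 2/ε)/ε)) with hM
  have hM0 : (0:ℝ) < M := lt_of_lt_of_le one_pos (le_max_left _ _)
  have hev2 : ∀ᶠ u in nhdsWithin 0 (Set.Ioo (0:ℝ) 1), u < Real.exp (-M) :=
    mem_nhdsWithin_of_mem_nhds (Iio_mem_nhds (by positivity))
  filter_upwards [eventually_mem_nhdsWithin, hev2] with u hu hu2
  have hL : M < Real.log (1/u) := by
    rw [one_div, Real.log_inv]
    have := Real.log_lt_log hu.1 hu2
    rw [Real.log_exp] at this
    linarith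
  set L := Real.log (1/u) with hLdef
  have hL0 : 0 < L := lt_trans hM0 hL
  have h2L : (0:ℝ) < 2 * L := by linarith
  have hub := tailInv_le hu
  have hlb := tailInv_ge hu (half_pos hε)
  have hnn := tailInv_nonneg hu
  have hεL1 : Real.log 2 < ε * L := by
    have h1 : Real.log 2 / ε ≤ M := le_trans (le_max_left _ _) (le_max_right _ _)
    rw [div_le_iff₀ hε] at h1
    nlinarith
  have hεL2 : 4 + 2/ε < L * ε := by
    have h1 : (4 + 2/ε)/ε ≤ M := le_trans (le_max_right _ _) (le_max_right _ _)
    rw [div_le_iff₀ hε] at h1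
    nlinarith
  have hx1 : chiSqOneTailInv u < (1+ε) * (2*L) := by nlinarith
  have hx2 : (1-ε) * (2*L) < chiSqOneTailInv u := by
    have hhalf : (0:ℝ) < 1 + ε/2 := by linarith
    have hB : (1-ε) * (2*L) < (2 * Real.log (1/u) - 4 - 1/(ε/2)) / (1 + ε/2) := by
      rw [lt_div_iff₀ hhalf, one_div_div, ← hLdef]
      nlinarith [hεL2, mul_pos hL0 (mul_pos hε hε)]
    linarith
  rw [Real.dist_eq, abs_lt]
  constructor
  · have h := (lt_div_iff₀ h2L).2 hx2
    linarith
  · have h := (div_lt_iff₀ h2L).2 hx1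
    linarith
end

section
/- Let (Zᵢ)_{i≥1} be a sequence of independent standard Gaussian random variables, and fix an integer k ≥ 0. Then for every ε > 0: (a) P(#{i ≤ n : Zᵢ² > (1+ε)·2·log n} ≥ k+1) → 0 as n → ∞, and (b) P(#{i ≤ n : Zᵢ² > (1−ε)·2·log n} ≤ k) → 0 as n → ∞. Equivalently, the (k+1)-st largest value among Z₁², …, Zₙ², divided by 2·log n, converges to 1 in probability. -/
open MeasureTheory ProbabilityTheory Filter Real Set
open scoped ENNReal NNReal

lemma aux_integral_x_exp {a : ℝ} (ha : 0 ≤ a) :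
    (∫ x in Set.Ioi a, x * Real.exp (-x ^ 2 / 2) = Real.exp (-a ^ 2 / 2)) ∧
      IntegrableOn (fun x => x * Real.exp (-x ^ 2 / 2)) (Set.Ioi a) := by
  have hderiv : ∀ x ∈ Set.Ici a, HasDerivAt (fun y => -Real.exp (-y ^ 2 / 2))
      (x * Real.exp (-x ^ 2 / 2)) x := by
    intro x _
    have h1 : HasDerivAt (fun y : ℝ => -y ^ 2 / 2) (-x) x := by
      have := ((hasDerivAt_pow 2 x).neg).div_const 2
      simpa using this.congr_deriv (by ring)
    have := (h1.exp).neg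
    exact this.congr_deriv (by ring)
  have hpos : ∀ x ∈ Set.Ioi a, 0 ≤ x * Real.exp (-x ^ 2 / 2) := fun x hx =>
    mul_nonneg (le_of_lt (lt_of_le_of_lt ha hx)) (Real.exp_nonneg _)
  have htend : Tendsto (fun y => -Real.exp (-y ^ 2 / 2)) atTop (nhds 0) := by
    rw [show (0 : ℝ) = -0 by ring]
    apply Tendsto.neg
    apply Real.tendsto_exp_atBot.comp
    apply Tendsto.atBot_div_const (by norm_num)
    exact tendsto_neg_atBot_iff.mpr (tendsto_pow_atTop (by norm_num))
  refine ⟨?_, integrableOn_Ioi_deriv_of_nonneg' hderiv hpos htend⟩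
  have := integral_Ioi_of_hasDerivAt_of_nonneg' hderiv hpos htend
  rw [this]; ring

lemma aux_pdf_eq : gaussianPDFReal 0 1 = fun x => (Real.sqrt (2 * π))⁻¹ * Real.exp (-x ^ 2 / 2) := by
  ext x
  simp [gaussianPDFReal]

lemma aux_sqrt_two_pi_ge_one : (1 : ℝ) ≤ Real.sqrt (2 * π) := by
  rw [show (1:ℝ) = Real.sqrt 1 by simp]
  apply Real.sqrt_le_sqrt
  nlinarith [Real.pi_gt_three]

lemma aux_tail_Ioi_le {a : ℝ} (ha : 1 ≤ a) :
    gaussianReal 0 1 {x | a < x} ≤ ENNReal.ofReal (Real.exp (-a ^ 2 / 2)) := by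
  rw [show {x : ℝ | a < x} = Set.Ioi a from rfl,
    gaussianReal_apply_eq_integral 0 one_ne_zero, aux_pdf_eq]
  apply ENNReal.ofReal_le_ofReal
  have ha0 : (0:ℝ) ≤ a := le_trans zero_le_one ha
  obtain ⟨hval, hint⟩ := aux_integral_x_exp ha0
  have hexp_int : IntegrableOn (fun x => Real.exp (-x ^ 2 / 2)) (Set.Ioi a) := by
    have : Integrable (fun x : ℝ => Real.exp (-(1/2) * x ^ 2)) := integrable_exp_neg_mul_sq (by norm_num)
    exact (this.congr (by apply Filter.EventuallyEq.of_eq; ext x; ring_nf)).integrableOn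
  calc ∫ x in Set.Ioi a, (Real.sqrt (2 * π))⁻¹ * Real.exp (-x ^ 2 / 2)
      = (Real.sqrt (2 * π))⁻¹ * ∫ x in Set.Ioi a, Real.exp (-x ^ 2 / 2) := by
        rw [integral_const_mul]
    _ ≤ 1 * ∫ x in Set.Ioi a, Real.exp (-x ^ 2 / 2) := by
        apply mul_le_mul_of_nonneg_right
        · rw [inv_le_one_iff₀]; right; exact aux_sqrt_two_pi_ge_one
        · exact setIntegral_nonneg measurableSet_Ioi fun x _ => (Real.exp_nonneg _)
    _ = ∫ x in Set.Ioi a, Real.exp (-x ^ 2 / 2) := one_mul _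
    _ ≤ ∫ x in Set.Ioi a, x * Real.exp (-x ^ 2 / 2) := by
        apply setIntegral_mono_on hexp_int hint measurableSet_Ioi
        intro x hx
        exact le_mul_of_one_le_left (Real.exp_nonneg _) (le_of_lt (lt_of_le_of_lt ha hx))
    _ = Real.exp (-a ^ 2 / 2) := hval

lemma aux_tail_Iio_eq (a : ℝ) :
    gaussianReal 0 1 {x | x < -a} = gaussianReal 0 1 {x | a < x} := by
  have hmap := gaussianReal_map_const_mul (μ := 0) (v := 1) (-1)
  have h2 : (NNReal.mk ((-1:ℝ)^2) (sq_nonneg _)) * 1 = 1 := by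
    ext; norm_num
  simp only [h2, mul_zero] at hmap
  conv_lhs => rw [← hmap]
  rw [Measure.map_apply (by fun_prop) (by exact measurableSet_lt measurable_id measurable_const)]
  congr 1
  ext x
  simp only [Set.mem_preimage, Set.mem_setOf_eq]
  constructor <;> intro h <;> linarith

lemma aux_sq_tail_le {t : ℝ} (ht : 1 ≤ t) :
    gaussianReal 0 1 {x | t < x ^ 2} ≤ ENNReal.ofReal (2 * Real.exp (-t / 2)) := by
  set a := Real.sqrt t with ha_def
  have ht0 : (0:ℝ) ≤ t := le_trans zero_le_one ht
  have ha1 : 1 ≤ a := by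
    rw [ha_def, show (1:ℝ) = Real.sqrt 1 by simp]
    exact Real.sqrt_le_sqrt ht
  have hsub : {x : ℝ | t < x ^ 2} ⊆ {x | x < -a} ∪ {x | a < x} := by
    intro x hx
    simp only [Set.mem_setOf_eq] at hx
    rcases lt_or_ge x 0 with h | h
    · left
      simp only [Set.mem_setOf_eq]
      nlinarith [Real.sq_sqrt ht0, Real.sqrt_nonneg t]
    · right
      simp only [Set.mem_setOf_eq]
      nlinarith [Real.sq_sqrt ht0, Real.sqrt_nonneg t]
  calc gaussianReal 0 1 {x | t < x ^ 2} ≤ gaussianReal 0 1 ({x | x < -a} ∪ {x | a < x}) :=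
        measure_mono hsub
    _ ≤ gaussianReal 0 1 {x | x < -a} + gaussianReal 0 1 {x | a < x} := measure_union_le _ _
    _ = gaussianReal 0 1 {x | a < x} + gaussianReal 0 1 {x | a < x} := by rw [aux_tail_Iio_eq]
    _ ≤ ENNReal.ofReal (Real.exp (-a ^ 2 / 2)) + ENNReal.ofReal (Real.exp (-a ^ 2 / 2)) := by
        gcongr <;> exact aux_tail_Ioi_le ha1
    _ = ENNReal.ofReal (2 * Real.exp (-a ^ 2 / 2)) := by
        rw [← ENNReal.ofReal_add (Real.exp_nonneg _) (Real.exp_nonneg _)]; ring_nf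
    _ = ENNReal.ofReal (2 * Real.exp (-t / 2)) := by rw [ha_def, Real.sq_sqrt ht0]

lemma aux_tail_Ioi_ge {a : ℝ} (ha : 0 ≤ a) :
    ENNReal.ofReal ((Real.sqrt (2 * π))⁻¹ * Real.exp (-(a + 1) ^ 2 / 2)) ≤
      gaussianReal 0 1 {x | a < x} := by
  have hsub : Set.Ioc a (a + 1) ⊆ {x : ℝ | a < x} := fun x hx => hx.1
  refine le_trans ?_ (measure_mono hsub)
  rw [gaussianReal_apply_eq_integral 0 one_ne_zero, aux_pdf_eq]
  apply ENNReal.ofReal_le_ofReal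
  have hint : IntegrableOn (fun x => (Real.sqrt (2 * π))⁻¹ * Real.exp (-x ^ 2 / 2))
      (Set.Ioc a (a + 1)) := by
    rw [← aux_pdf_eq]
    exact (integrable_gaussianPDFReal 0 1).integrableOn
  have hconst : ∫ _x in Set.Ioc a (a + 1), ((Real.sqrt (2 * π))⁻¹ * Real.exp (-(a + 1) ^ 2 / 2))
      = (Real.sqrt (2 * π))⁻¹ * Real.exp (-(a + 1) ^ 2 / 2) := by
    rw [setIntegral_const]
    rw [Real.volume_real_Ioc]
    norm_num
  rw [← hconst]
  apply setIntegral_mono_on (integrableOn_const (by rw [Real.volume_Ioc]; exact ENNReal.ofReal_ne_top)) hint measurableSet_Ioc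
  intro x hx
  have hx0 : 0 ≤ x := le_trans ha (le_of_lt hx.1)
  apply mul_le_mul_of_nonneg_left _ (by positivity)
  apply Real.exp_le_exp.mpr
  have : x ^ 2 ≤ (a + 1) ^ 2 := by nlinarith [hx.2]
  linarith

lemma aux_sq_tail_ge (t : ℝ) :
    ENNReal.ofReal ((Real.sqrt (2 * π))⁻¹ * Real.exp (-(Real.sqrt t + 1) ^ 2 / 2)) ≤
      gaussianReal 0 1 {x | t < x ^ 2} := by
  have hsub : {x : ℝ | Real.sqrt t < x} ⊆ {x | t < x ^ 2} := by
    intro x hx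
    simp only [Set.mem_setOf_eq] at hx ⊢
    have hx0 : 0 < x := lt_of_le_of_lt (Real.sqrt_nonneg t) hx
    exact (Real.sqrt_lt' hx0).mp hx
  exact le_trans (aux_tail_Ioi_ge (Real.sqrt_nonneg t)) (measure_mono hsub)

lemma aux_sqSet_meas (t : ℝ) : MeasurableSet {x : ℝ | t < x ^ 2} := by
  have : {x : ℝ | t < x ^ 2} = (fun x : ℝ => x ^ 2) ⁻¹' Set.Ioi t := rfl
  rw [this]
  exact (measurable_id.pow_const 2) measurableSet_Ioi

lemma aux_log_ge_one {n : ℕ} (hn : 3 ≤ n) : 1 ≤ Real.log n := by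
  have h3 : (3:ℝ) ≤ n := by exact_mod_cast hn
  have : Real.exp 1 ≤ 3 := le_of_lt (lt_of_lt_of_le Real.exp_one_lt_d9 (by norm_num))
  calc (1:ℝ) ≤ Real.log 3 := (Real.le_log_iff_exp_le (by norm_num)).mpr this
    _ ≤ Real.log n := Real.log_le_log (by norm_num) h3

lemma part_a (Ω : Type*) [MeasurableSpace Ω]
    (P : Measure Ω) [IsProbabilityMeasure P] (Z : ℕ → Ω → ℝ)
    (hmeas : ∀ i, Measurable (Z i))
    (hlaw : ∀ i, P.map (Z i) = gaussianReal 0 1) (k : ℕ) {ε : ℝ} (hε : 0 < ε) :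
    Tendsto (fun n : ℕ =>
        P {ω | k + 1 ≤
          ((Finset.range n).filter fun i => (1 + ε) * (2 * Real.log n) < (Z i ω) ^ 2).card})
      atTop (nhds 0) := by
  have hq : ∀ (i : ℕ) (t : ℝ), P (Z i ⁻¹' {x | t < x ^ 2}) = gaussianReal 0 1 {x | t < x ^ 2} := by
    intro i t
    rw [← hlaw i, Measure.map_apply (hmeas i) (aux_sqSet_meas t)]
  have htop : Tendsto (fun n : ℕ => ENNReal.ofReal (2 * Real.exp (-(ε * Real.log n))))
      atTop (nhds 0) := by
    have h1 : Tendsto (fun n : ℕ => 2 * Real.exp (-(ε * Real.log n))) atTop (nhds 0) := by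
      have h2 : Tendsto (fun n : ℕ => ε * Real.log n) atTop atTop :=
        (Real.tendsto_log_atTop.comp tendsto_natCast_atTop_atTop).const_mul_atTop hε
      have h3 := Real.tendsto_exp_atBot.comp (tendsto_neg_atTop_atBot.comp h2)
      have := h3.const_mul (2:ℝ)
      simpa using this
    have := (ENNReal.continuous_ofReal.tendsto 0).comp h1
    simpa [Function.comp_def] using this
  apply tendsto_of_tendsto_of_tendsto_of_le_of_le' tendsto_const_nhds htop
  · exact Filter.Eventually.of_forall fun n => zero_le
  · filter_upwards [eventually_ge_atTop 3] with n hn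
    set t := (1 + ε) * (2 * Real.log n) with ht_def
    have hlog : 1 ≤ Real.log n := aux_log_ge_one hn
    have ht1 : 1 ≤ t := by nlinarith
    have hsub : {ω | k + 1 ≤
        ((Finset.range n).filter fun i => t < (Z i ω) ^ 2).card} ⊆
        ⋃ i ∈ Finset.range n, Z i ⁻¹' {x | t < x ^ 2} := by
      intro ω hω
      have hpos : 0 < ((Finset.range n).filter fun i => t < (Z i ω) ^ 2).card :=
        lt_of_lt_of_le (Nat.succ_pos k) hω
      obtain ⟨i, hi⟩ := Finset.card_pos.mp hpos
      rw [Finset.mem_filter] at hi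
      exact Set.mem_biUnion hi.1 hi.2
    calc P {ω | k + 1 ≤ ((Finset.range n).filter fun i => t < (Z i ω) ^ 2).card}
        ≤ P (⋃ i ∈ Finset.range n, Z i ⁻¹' {x | t < x ^ 2}) := measure_mono hsub
      _ ≤ ∑ i ∈ Finset.range n, P (Z i ⁻¹' {x | t < x ^ 2}) := measure_biUnion_finset_le _ _
      _ = ∑ _i ∈ Finset.range n, gaussianReal 0 1 {x | t < x ^ 2} :=
          Finset.sum_congr rfl fun i _ => hq i t
      _ = (n : ℝ≥0∞) * gaussianReal 0 1 {x | t < x ^ 2} := by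
          rw [Finset.sum_const, Finset.card_range, nsmul_eq_mul]
      _ ≤ (n : ℝ≥0∞) * ENNReal.ofReal (2 * Real.exp (-t / 2)) :=
          mul_le_mul_right (aux_sq_tail_le ht1) _
      _ = ENNReal.ofReal ((n : ℝ) * (2 * Real.exp (-t / 2))) := by
          rw [← ENNReal.ofReal_natCast n, ← ENNReal.ofReal_mul (by positivity)]
      _ = ENNReal.ofReal (2 * Real.exp (-(ε * Real.log n))) := by
          congr 1
          have hn0 : (0:ℝ) < n := by positivity
          rw [show (n:ℝ) * (2 * Real.exp (-t / 2)) = 2 * (Real.exp (Real.log n) * Real.exp (-t/2))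
            by rw [Real.exp_log hn0]; ring, ← Real.exp_add]
          congr 1
          rw [ht_def]; ring

lemma part_b (Ω : Type*) [MeasurableSpace Ω]
    (P : Measure Ω) [IsProbabilityMeasure P] (Z : ℕ → Ω → ℝ)
    (hmeas : ∀ i, Measurable (Z i))
    (hindep : iIndepFun Z P)
    (hlaw : ∀ i, P.map (Z i) = gaussianReal 0 1) (k : ℕ) {ε : ℝ} (hε : 0 < ε)
    (hε2 : ε ≤ 1 / 2) :
    Tendsto (fun n : ℕ =>
        P {ω |
          ((Finset.range n).filter fun i => (1 - ε) * (2 * Real.log n) < (Z i ω) ^ 2).card ≤ k})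
      atTop (nhds 0) := by
  -- notation
  set c : ℝ := (Real.sqrt (2 * π))⁻¹ with hc_def
  have hc_pos : 0 < c := by rw [hc_def]; positivity
  have hc_le_one : c ≤ 1 := by
    rw [hc_def, inv_le_one_iff₀]
    right
    rw [show (1:ℝ) = Real.sqrt 1 by simp]
    apply Real.sqrt_le_sqrt
    nlinarith [Real.pi_gt_three]
  set t : ℕ → ℝ := fun n => (1 - ε) * (2 * Real.log n) with ht_def
  set p : ℕ → ℝ := fun n => c * Real.exp (-(Real.sqrt (t n) + 1) ^ 2 / 2) with hp_def
  have hp_pos : ∀ n, 0 < p n := fun n => by positivity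
  have hp_le_one : ∀ n, p n ≤ 1 := fun n => by
    calc p n ≤ c * 1 := by
          apply mul_le_mul_of_nonneg_left _ hc_pos.le
          rw [Real.exp_le_one_iff]
          have := sq_nonneg (Real.sqrt (t n) + 1)
          linarith
      _ ≤ 1 := by linarith
  have hq : ∀ (i : ℕ) (s : ℝ), P (Z i ⁻¹' {x | s < x ^ 2}) = gaussianReal 0 1 {x | s < x ^ 2} :=
    fun i s => by rw [← hlaw i, Measure.map_apply (hmeas i) (aux_sqSet_meas s)]
  -- measure of block intersections
  have hblock : ∀ (s : ℝ) (B : Finset ℕ),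
      P (⋂ i ∈ B, (Z i ⁻¹' {x | s < x ^ 2})ᶜ)
        = (1 - gaussianReal 0 1 {x | s < x ^ 2}) ^ B.card := by
    intro s B
    rw [hindep.meas_biInter (S := B)
      (fun i _ => ⟨{x | s < x ^ 2}ᶜ, (aux_sqSet_meas s).compl, by rw [Set.preimage_compl]⟩)]
    rw [Finset.prod_congr rfl (fun i _ => ?_), Finset.prod_const]
    rw [prob_compl_eq_one_sub ((hmeas i) (aux_sqSet_meas s)), hq]
  -- main squeeze
  have htail : Tendsto (fun n : ℕ => ((n / (k + 1) : ℕ) : ℝ) * p n) atTop atTop := by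
    set C : ℝ := c * Real.exp (-(1:ℝ)/2) / (2 * (k + 1)) with hC_def
    have hC_pos : 0 < C := by rw [hC_def]; positivity
    have hlow : Tendsto (fun n : ℕ =>
        C * Real.exp (ε * Real.log n - Real.sqrt (2 * Real.log n))) atTop atTop := by
      apply Tendsto.const_mul_atTop hC_pos
      apply Real.tendsto_exp_atTop.comp
      have hlog : Tendsto (fun n : ℕ => Real.log n) atTop atTop :=
        Real.tendsto_log_atTop.comp tendsto_natCast_atTop_atTop
      have hlow2 : Tendsto (fun n : ℕ => ε / 2 * Real.log n) atTop atTop :=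
        hlog.const_mul_atTop (by positivity)
      apply tendsto_atTop_mono' atTop _ hlow2
      filter_upwards [hlog.eventually_ge_atTop (8 / ε ^ 2), hlog.eventually_ge_atTop 0]
        with n hL hL0
      have hsqrt : Real.sqrt (2 * Real.log n) ≤ ε / 2 * Real.log n := by
        have h1 : 2 * Real.log n ≤ (ε / 2 * Real.log n) ^ 2 := by
          have h2 : ε ^ 2 * Real.log n ≥ 8 := by
            rw [ge_iff_le, show (8:ℝ) = ε ^ 2 * (8 / ε ^ 2) by field_simp]
            exact mul_le_mul_of_nonneg_left hL (by positivity)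
          nlinarith
        calc Real.sqrt (2 * Real.log n) ≤ Real.sqrt ((ε / 2 * Real.log n) ^ 2) :=
              Real.sqrt_le_sqrt h1
          _ = ε / 2 * Real.log n := Real.sqrt_sq (by positivity)
      show ε / 2 * Real.log n ≤ ε * Real.log n - Real.sqrt (2 * Real.log n)
      linarith
    apply tendsto_atTop_mono' atTop _ hlow
    filter_upwards [eventually_ge_atTop (max 3 (2 * (k + 1)))] with n hn
    have hn3 : 3 ≤ n := le_trans (le_max_left _ _) hn
    have hnk : 2 * (k + 1) ≤ n := le_trans (le_max_right _ _) hn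
    have hn0 : (0:ℝ) < n := by positivity
    have hlog0 : 0 ≤ Real.log n := Real.log_nonneg (by exact_mod_cast le_trans (by norm_num) hn3)
    have ht0 : 0 ≤ t n := by simp only [ht_def]; nlinarith
    -- lower bound on m
    have hm : (n:ℝ) / (2 * (k + 1)) ≤ ((n / (k + 1) : ℕ) : ℝ) := by
      rw [div_le_iff₀ (by positivity)]
      have h1 := Nat.div_add_mod n (k + 1)
      have h2 : n % (k + 1) < k + 1 := Nat.mod_lt n (Nat.succ_pos k)
      have h3 : n ≤ 2 * ((k + 1) * (n / (k + 1))) := by omega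
      calc (n:ℝ) ≤ 2 * ((k + 1) * (n / (k + 1) : ℕ)) := by exact_mod_cast h3
        _ = ((n / (k + 1) : ℕ) : ℝ) * (2 * (k + 1)) := by push_cast; ring
    -- lower bound on p
    set X : ℝ := (1 - ε) * (2 * Real.log n) + 2 * Real.sqrt (2 * Real.log n) + 1 with hX_def
    have hp_ge : c * Real.exp (-X / 2) ≤ p n := by
      apply mul_le_mul_of_nonneg_left _ hc_pos.le
      apply Real.exp_le_exp.mpr
      have hsq : Real.sqrt (t n) ^ 2 = t n := Real.sq_sqrt ht0
      have hs_le : Real.sqrt (t n) ≤ Real.sqrt (2 * Real.log n) := by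
        apply Real.sqrt_le_sqrt
        simp only [ht_def]; nlinarith
      have h1 : (Real.sqrt (t n) + 1) ^ 2 ≤ X := by
        rw [hX_def]
        have htval : t n = (1 - ε) * (2 * Real.log n) := rfl
        have := Real.sqrt_nonneg (t n)
        nlinarith [Real.sqrt_nonneg (2 * Real.log n)]
      linarith
    calc C * Real.exp (ε * Real.log n - Real.sqrt (2 * Real.log n))
        = c / (2 * ((k:ℝ) + 1)) * Real.exp (-(1:ℝ)/2 +
            (ε * Real.log n - Real.sqrt (2 * Real.log n))) := by
          rw [hC_def, Real.exp_add]
          ring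
      _ = c / (2 * ((k:ℝ) + 1)) * Real.exp (Real.log n + -X / 2) := by
          congr 2
          rw [hX_def]
          ring
      _ = c / (2 * ((k:ℝ) + 1)) * (Real.exp (Real.log n) * Real.exp (-X / 2)) := by
          rw [Real.exp_add]
      _ = (n:ℝ) / (2 * ((k:ℝ) + 1)) * (c * Real.exp (-X / 2)) := by
          rw [Real.exp_log hn0]
          ring
      _ ≤ ((n / (k + 1) : ℕ) : ℝ) * p n := by
          apply mul_le_mul hm hp_ge (by positivity) (by positivity)
  -- conclude
  have hzero : Tendsto (fun n : ℕ =>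
      ((k:ℝ≥0∞) + 1) * ENNReal.ofReal (Real.exp (-(((n / (k + 1) : ℕ) : ℝ) * p n))))
      atTop (nhds 0) := by
    have h1 : Tendsto (fun n : ℕ => Real.exp (-(((n / (k + 1) : ℕ) : ℝ) * p n))) atTop (nhds 0) :=
      Real.tendsto_exp_atBot.comp (tendsto_neg_atTop_atBot.comp htail)
    have h2 := (ENNReal.continuous_ofReal.tendsto 0).comp h1
    simp only [Function.comp_def, ENNReal.ofReal_zero] at h2
    have h3 := ENNReal.Tendsto.const_mul h2 (a := (k:ℝ≥0∞) + 1)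
      (Or.inr (by simp [ENNReal.add_ne_top]))
    simpa using h3
  apply tendsto_of_tendsto_of_tendsto_of_le_of_le' tendsto_const_nhds hzero
  · exact Filter.Eventually.of_forall fun n => zero_le
  · filter_upwards [eventually_ge_atTop (k + 1)] with n hn
    set m := n / (k + 1) with hm_def
    have hmn : (k + 1) * m ≤ n := Nat.mul_div_le n (k + 1) |>.trans_eq rfl
    have hm1 : 1 ≤ m := Nat.one_le_div_iff (Nat.succ_pos k) |>.mpr hn
    -- pigeonhole inclusion
    have hsub : {ω | ((Finset.range n).filter fun i => t n < (Z i ω) ^ 2).card ≤ k} ⊆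
        ⋃ j ∈ Finset.range (k + 1), ⋂ i ∈ Finset.Ico (j * m) (j * m + m),
          (Z i ⁻¹' {x | t n < x ^ 2})ᶜ := by
      intro ω hω
      simp only [Set.mem_setOf_eq] at hω
      by_contra hnot
      have hch : ∀ j : ℕ, ∃ i, j < k + 1 →
          (i ∈ Finset.Ico (j * m) (j * m + m) ∧ t n < Z i ω ^ 2) := by
        intro j
        by_cases hj : j < k + 1
        · by_contra h
          push_neg at h
          apply hnot
          refine Set.mem_biUnion (Finset.mem_range.mpr hj) (Set.mem_iInter₂.mpr fun i hi => ?_)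
          simp only [Set.mem_compl_iff, Set.mem_preimage, Set.mem_setOf_eq, not_lt]
          exact (h i).2 hi
        · exact ⟨0, fun h' => absurd h' hj⟩
      choose f hf using hch
      have hcard : k + 1 ≤ ((Finset.range n).filter fun i => t n < (Z i ω) ^ 2).card := by
        have hmaps : ∀ j ∈ Finset.range (k + 1),
            f j ∈ (Finset.range n).filter fun i => t n < (Z i ω) ^ 2 := by
          intro j hj
          have hj' := Finset.mem_range.mp hj
          obtain ⟨hi1, hi2⟩ := hf j hj'
          rw [Finset.mem_Ico] at hi1
          refine Finset.mem_filter.mpr ⟨Finset.mem_range.mpr ?_, hi2⟩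
          calc f j < j * m + m := hi1.2
            _ = (j + 1) * m := by ring
            _ ≤ (k + 1) * m := Nat.mul_le_mul_right m hj'
            _ ≤ n := hmn
        have hinj : Set.InjOn f (Finset.range (k + 1)) := by
          intro j1 h1 j2 h2 heq
          have ha := (hf j1 (Finset.mem_range.mp (by exact_mod_cast h1))).1
          have hb := (hf j2 (Finset.mem_range.mp (by exact_mod_cast h2))).1
          rw [Finset.mem_Ico] at ha hb
          have e1 : f j1 / m = j1 := Nat.div_eq_of_lt_le ha.1 (by rw [Nat.succ_mul]; exact ha.2)
          have e2 : f j2 / m = j2 := Nat.div_eq_of_lt_le hb.1 (by rw [Nat.succ_mul]; exact hb.2)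
          rw [← e1, ← e2, heq]
        calc k + 1 = (Finset.range (k + 1)).card := (Finset.card_range _).symm
          _ ≤ _ := Finset.card_le_card_of_injOn f hmaps hinj
      omega
    -- measure bound
    have hb : (1 - gaussianReal 0 1 {x | t n < x ^ 2}) ^ m ≤
        ENNReal.ofReal (Real.exp (-((m:ℝ) * p n))) := by
      have h1 : ENNReal.ofReal (p n) ≤ gaussianReal 0 1 {x | t n < x ^ 2} := by
        simpa [hp_def, hc_def] using aux_sq_tail_ge (t n)
      have h2 : (1:ℝ≥0∞) - gaussianReal 0 1 {x | t n < x ^ 2} ≤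
          ENNReal.ofReal (Real.exp (-(p n))) := by
        calc (1:ℝ≥0∞) - gaussianReal 0 1 {x | t n < x ^ 2}
            ≤ 1 - ENNReal.ofReal (p n) := tsub_le_tsub_left h1 1
          _ = ENNReal.ofReal (1 - p n) := by
              rw [ENNReal.ofReal_sub 1 (hp_pos n).le, ENNReal.ofReal_one]
          _ ≤ ENNReal.ofReal (Real.exp (-(p n))) :=
              ENNReal.ofReal_le_ofReal (by nlinarith [Real.add_one_le_exp (-(p n))])
      calc (1 - gaussianReal 0 1 {x | t n < x ^ 2}) ^ m
          ≤ (ENNReal.ofReal (Real.exp (-(p n)))) ^ m := pow_le_pow_left' h2 m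
        _ = ENNReal.ofReal (Real.exp (-(p n)) ^ m) :=
            (ENNReal.ofReal_pow (Real.exp_nonneg _) m).symm
        _ = ENNReal.ofReal (Real.exp (-((m:ℝ) * p n))) := by
            rw [← Real.exp_nat_mul]
            congr 1
            ring
    calc P {ω | ((Finset.range n).filter fun i => t n < (Z i ω) ^ 2).card ≤ k}
        ≤ P (⋃ j ∈ Finset.range (k + 1), ⋂ i ∈ Finset.Ico (j * m) (j * m + m),
            (Z i ⁻¹' {x | t n < x ^ 2})ᶜ) := measure_mono hsub
      _ ≤ ∑ j ∈ Finset.range (k + 1), P (⋂ i ∈ Finset.Ico (j * m) (j * m + m),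
            (Z i ⁻¹' {x | t n < x ^ 2})ᶜ) := measure_biUnion_finset_le _ _
      _ = ∑ _j ∈ Finset.range (k + 1), (1 - gaussianReal 0 1 {x | t n < x ^ 2}) ^ m := by
          refine Finset.sum_congr rfl fun j _ => ?_
          rw [hblock (t n) _, Nat.card_Ico]
          congr 1
          omega
      _ = ((k:ℝ≥0∞) + 1) * (1 - gaussianReal 0 1 {x | t n < x ^ 2}) ^ m := by
          rw [Finset.sum_const, Finset.card_range, nsmul_eq_mul]
          push_cast
          ring
      _ ≤ ((k:ℝ≥0∞) + 1) * ENNReal.ofReal (Real.exp (-((m:ℝ) * p n))) :=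
          mul_le_mul_right hb _

/-- For i.i.d. standard Gaussians `Z₁, Z₂, …` and a fixed `k ≥ 0`, for every `ε > 0`:
(a) `P(#{i ≤ n : Zᵢ² > (1+ε)·2·log n} ≥ k+1) → 0`, and
(b) `P(#{i ≤ n : Zᵢ² > (1−ε)·2·log n} ≤ k) → 0` as `n → ∞`;
i.e. the `(k+1)`-st largest of `Z₁², …, Zₙ²` divided by `2·log n` tends to `1` in
probability. -/
theorem orderStat_sq_gaussian_div_two_log_tendsto (Ω : Type*) [MeasurableSpace Ω]
    (P : Measure Ω) [IsProbabilityMeasure P] (Z : ℕ → Ω → ℝ)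
    (hmeas : ∀ i, Measurable (Z i))
    (hindep : iIndepFun Z P)
    (hlaw : ∀ i, P.map (Z i) = gaussianReal 0 1) (k : ℕ) :
    ∀ ε : ℝ, 0 < ε →
      (Tendsto (fun n : ℕ =>
          P {ω | k + 1 ≤
            ((Finset.range n).filter fun i => (1 + ε) * (2 * Real.log n) < (Z i ω) ^ 2).card})
        atTop (nhds 0)) ∧
      (Tendsto (fun n : ℕ =>
          P {ω |
            ((Finset.range n).filter fun i => (1 - ε) * (2 * Real.log n) < (Z i ω) ^ 2).card ≤ k})
        atTop (nhds 0)) := by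
  intro ε hε
  constructor
  · exact part_a Ω P Z hmeas hlaw k hε
  · have hε' : 0 < min ε (1/2) := lt_min hε (by norm_num)
    have hε'2 : min ε (1/2) ≤ 1/2 := min_le_right _ _
    have hb := part_b Ω P Z hmeas hindep hlaw k hε' hε'2
    apply tendsto_of_tendsto_of_tendsto_of_le_of_le' tendsto_const_nhds hb
    · exact Filter.Eventually.of_forall fun n => zero_le
    · filter_upwards [eventually_ge_atTop 1] with n hn
      apply measure_mono
      intro ω hω
      simp only [Set.mem_setOf_eq] at hω ⊢
      refine le_trans (Finset.card_le_card ?_) hω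
      intro i hi
      rw [Finset.mem_filter] at hi ⊢
      refine ⟨hi.1, lt_of_le_of_lt ?_ hi.2⟩
      have hlog : 0 ≤ Real.log n := Real.log_nonneg (by exact_mod_cast hn)
      have h1 : min ε (1/2) ≤ ε := min_le_left _ _
      nlinarith
end
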